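/- Let H be a C^1 norm (away from 0) on ℝ^N with strictly convex unit ball, H₀ its dual norm, and v(x) = (C_r − C_R)·(H₀(x)^{2−N} − R^{2−N})/(r^{2−N} − R^{2−N}) + C_R for N ≥ 3 (respectively v(x) = (C_r − C_R)·ln(H₀(x)/R)/ln(r/R) + C_R for N = 2), defined for r ≤ H₀(x) ≤ R with 0 < r < R. Then v solves the anisotropic boundary value problem: Δ_H v = 0 in the annulus {r < H₀(x) < R}, v = C_r on {H₀ = r} and v = C_R on {H₀ = R}, where Δ_H v = div(H(∇v)∇_ξH(∇v)). -/

import Mathlib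

open Filter Real Set
open scoped RealInnerProductSpace Topology


open Filter Real Set
open scoped RealInnerProductSpace Topology

/-- Euler identity for 1-homogeneous (on rays) functions. -/
lemma euler_hasFDerivAt {E : Type*} [NormedAddCommGroup E] [NormedSpace ℝ E]
    {g : E → ℝ} {L : E →L[ℝ] ℝ} {z : E}
    (hg : HasFDerivAt g L z) (hom : ∀ s : ℝ, 0 < s → g (s • z) = s * g z) :
    L z = g z := by
  have hsz : HasDerivAt (fun s : ℝ => s • z) z 1 := by
    simpa using (hasDerivAt_id (1:ℝ)).smul_const z
  have hg' : HasFDerivAt g L ((1:ℝ) • z) := by simpa using hg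
  have h1 : HasDerivAt (fun s : ℝ => g (s • z)) (L z) 1 := by
    exact hg'.comp_hasDerivAt (x := (1:ℝ)) hsz
  have h2 : HasDerivAt (fun s : ℝ => s * g z) (g z) 1 := by
    simpa using (hasDerivAt_id (1:ℝ)).mul_const (g z)
  have h3 : (fun s : ℝ => s * g z) =ᶠ[𝓝 (1:ℝ)] (fun s : ℝ => g (s • z)) := by
    filter_upwards [isOpen_Ioi.mem_nhds (show (0:ℝ) < 1 by norm_num)] with s hs
    exact (hom s hs).symm
  exact ((h2.congr_of_eventuallyEq h3.symm).unique h1).symm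

/-- Subgradient inequality for convex differentiable functions. -/
lemma subgrad_hasFDerivAt {E : Type*} [NormedAddCommGroup E] [NormedSpace ℝ E]
    {g : E → ℝ} (hconv : ConvexOn ℝ Set.univ g) {L : E →L[ℝ] ℝ} {z : E}
    (hg : HasFDerivAt g L z) (w : E) :
    g z + L (w - z) ≤ g w := by
  set ψ : ℝ → ℝ := fun t => g (z + t • (w - z)) with hψ
  have hψconv : ConvexOn ℝ Set.univ ψ := by
    have := hconv.comp_affineMap (AffineMap.lineMap z w)
    simp only [Set.preimage_univ] at this
    have hfun : ψ = g ∘ (AffineMap.lineMap z w) := by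
      funext t
      simp only [ψ, Function.comp_apply, AffineMap.lineMap_apply_module]
      congr 1
      module
    rw [hfun]; exact this
  have hlin : HasDerivAt (fun t : ℝ => z + t • (w - z)) (w - z) 0 := by
    simpa using ((hasDerivAt_id (0:ℝ)).smul_const (w - z)).const_add z
  have hg0 : HasFDerivAt g L (z + (0:ℝ) • (w - z)) := by simpa using hg
  have hψd : HasDerivAt ψ (L (w - z)) 0 := by
    exact hg0.comp_hasDerivAt (x := (0:ℝ)) hlin
  have := hψconv.le_slope_of_hasDerivAt (Set.mem_univ 0) (Set.mem_univ 1)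
    (by norm_num) hψd
  have hs : slope ψ 0 1 = g w - g z := by
    simp [slope, ψ]
  rw [hs] at this
  linarith

open Filter Real Set
open scoped RealInnerProductSpace Topology

lemma inner_gradient_eq_fderiv {E : Type*} [NormedAddCommGroup E] [InnerProductSpace ℝ E]
    [CompleteSpace E] {f : E → ℝ} {z : E} (hf : DifferentiableAt ℝ f z) (w : E) :
    ⟪gradient f z, w⟫ = fderiv ℝ f z w := by
  have h1 := hf.hasGradientAt
  have h2 := (hasGradientAt_iff_hasFDerivAt.mp h1).fderiv
  rw [h2]
  simp [InnerProductSpace.toDual_apply_apply]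

lemma hasGradientAt_of_inner {E : Type*} [NormedAddCommGroup E] [InnerProductSpace ℝ E]
    [CompleteSpace E] {f : E → ℝ} {L : E →L[ℝ] ℝ} {z w : E}
    (hf : HasFDerivAt f L z) (hw : ∀ u, L u = ⟪w, u⟫) : HasGradientAt f w z := by
  rw [hasGradientAt_iff_hasFDerivAt]
  have hL : (InnerProductSpace.toDual ℝ E) w = L := by
    ext u
    simp [InnerProductSpace.toDual_apply_apply, hw u]
  rw [hL]; exact hf



set_option maxHeartbeats 1000000 in
/-- The explicit radial function `v` (logarithmic for `N = 2`, power-type for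
`N ≥ 3`) solves the anisotropic boundary value problem on the Wulff annulus:
`Δ_H v = div(H(∇v)∇H(∇v)) = 0` in `{r < H₀ < R}`, with `v = C_r` on `{H₀ = r}` and
`v = C_R` on `{H₀ = R}`. -/
theorem anisotropic_annulus_solution
    (N : ℕ) (hN : 2 ≤ N) (H H₀ : EuclideanSpace ℝ (Fin N) → ℝ)
    (hconv : ConvexOn ℝ Set.univ H)
    (hpos : ∀ ξ, 0 ≤ H ξ)
    (hdef : ∀ ξ, H ξ = 0 ↔ ξ = 0)
    (hhom : ∀ (t : ℝ) (ξ : EuclideanSpace ℝ (Fin N)), H (t • ξ) = |t| * H ξ)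
    (hC2 : ContDiffOn ℝ 2 H {(0 : EuclideanSpace ℝ (Fin N))}ᶜ)
    (hstrict : StrictConvex ℝ {ξ : EuclideanSpace ℝ (Fin N) | H ξ < 1})
    (hdual : ∀ x, H₀ x
      = ⨆ ξ : {ξ : EuclideanSpace ℝ (Fin N) // ξ ≠ 0}, (inner ℝ x ξ.1 : ℝ) / H ξ.1)
    (hC2₀ : ContDiffOn ℝ 2 H₀ {(0 : EuclideanSpace ℝ (Fin N))}ᶜ)
    (r R Cr CR : ℝ) (hr : 0 < r) (hrR : r < R)
    (v : EuclideanSpace ℝ (Fin N) → ℝ)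
    (hv : ∀ x, v x =
      if N = 2 then
        (Cr - CR) * (Real.log (H₀ x / R) / Real.log (r / R)) + CR
      else
        (Cr - CR) * ((H₀ x ^ ((2 : ℝ) - N) - R ^ ((2 : ℝ) - N)) /
          (r ^ ((2 : ℝ) - N) - R ^ ((2 : ℝ) - N))) + CR)
    (X : EuclideanSpace ℝ (Fin N) → EuclideanSpace ℝ (Fin N))
    (hX : ∀ x, X x = H (gradient v x) • gradient H (gradient v x)) :
    (∀ x, r < H₀ x → H₀ x < R →
      ∑ i : Fin N,
        (inner ℝ (fderiv ℝ X x (EuclideanSpace.single i 1)) (EuclideanSpace.single i 1) : ℝ)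
          = 0) ∧
    (∀ x, H₀ x = r → v x = Cr) ∧ (∀ x, H₀ x = R → v x = CR) := by
  have hR : 0 < R := hr.trans hrR
  have hNpos : 0 < N := by omega
  haveI : Nonempty (Fin N) := ⟨⟨0, hNpos⟩⟩
  haveI hnt : Nontrivial (EuclideanSpace ℝ (Fin N)) := by
    refine ⟨⟨EuclideanSpace.single ⟨0, hNpos⟩ 1, 0, ?_⟩⟩
    intro h
    have := congrArg (fun v => v ⟨0, hNpos⟩) h
    simp [EuclideanSpace.single_apply] at this
  -- positivity of H away from 0
  have hHpos : ∀ ξ : EuclideanSpace ℝ (Fin N), ξ ≠ 0 → 0 < H ξ := by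
    intro ξ hξ
    rcases (hpos ξ).lt_or_eq with h | h
    · exact h
    · exact absurd ((hdef ξ).1 h.symm) hξ
  have hH0 : H 0 = 0 := (hdef 0).2 rfl
  -- lower bound m * ‖ξ‖ ≤ H ξ
  obtain ⟨m, hm, hHlow⟩ : ∃ m : ℝ, 0 < m ∧ ∀ ξ : EuclideanSpace ℝ (Fin N), m * ‖ξ‖ ≤ H ξ := by
    have hsub : Metric.sphere (0 : EuclideanSpace ℝ (Fin N)) 1 ⊆ {(0 : EuclideanSpace ℝ (Fin N))}ᶜ := by
      intro ξ hξ
      simp only [Metric.mem_sphere, dist_zero_right] at hξ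
      simp only [Set.mem_compl_iff, Set.mem_singleton_iff]
      intro h
      rw [h] at hξ; simp at hξ
    obtain ⟨ξm, hξm_mem, hξm_min⟩ :=
      (isCompact_sphere (0 : EuclideanSpace ℝ (Fin N)) 1).exists_isMinOn
        (NormedSpace.sphere_nonempty.mpr zero_le_one)
        (hC2.continuousOn.mono hsub)
    have hξm_norm : ‖ξm‖ = 1 := by simpa using hξm_mem
    have hξm_ne : ξm ≠ 0 := by intro h; rw [h] at hξm_norm; simp at hξm_norm
    refine ⟨H ξm, hHpos ξm hξm_ne, fun ξ => ?_⟩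
    rcases eq_or_ne ξ 0 with rfl | hξ
    · simp [hH0]
    · have hn : (0:ℝ) < ‖ξ‖ := norm_pos_iff.mpr hξ
      have hunit : ‖ξ‖⁻¹ • ξ ∈ Metric.sphere (0 : EuclideanSpace ℝ (Fin N)) 1 := by
        simp only [Metric.mem_sphere, dist_zero_right]
        exact norm_smul_inv_norm hξ
      have h1 : H ξm ≤ H (‖ξ‖⁻¹ • ξ) := hξm_min hunit
      have h2 : H ξ = ‖ξ‖ * H (‖ξ‖⁻¹ • ξ) := by
        rw [hhom, abs_of_pos (inv_pos.mpr hn)]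
        field_simp
      rw [h2]
      nlinarith
  -- boundedness of the dual family
  have hbdd : ∀ x : EuclideanSpace ℝ (Fin N), BddAbove (Set.range fun ξ :
      {ξ : EuclideanSpace ℝ (Fin N) // ξ ≠ 0} => (inner ℝ x ξ.1 : ℝ) / H ξ.1) := by
    intro x
    refine ⟨‖x‖ / m, ?_⟩
    rintro - ⟨⟨ξ, hξ⟩, rfl⟩
    have hHξ : 0 < H ξ := hHpos ξ hξ
    rw [div_le_div_iff₀ hHξ hm]
    calc (inner ℝ x ξ : ℝ) * m ≤ ‖x‖ * ‖ξ‖ * m := by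
          have := real_inner_le_norm x ξ
          nlinarith [norm_nonneg x, norm_nonneg ξ]
      _ = ‖x‖ * (m * ‖ξ‖) := by ring
      _ ≤ ‖x‖ * H ξ := by
          have := hHlow ξ
          nlinarith [norm_nonneg x]
  haveI : Nonempty {ξ : EuclideanSpace ℝ (Fin N) // ξ ≠ 0} := by
    obtain ⟨a, ha⟩ := exists_ne (0 : EuclideanSpace ℝ (Fin N))
    exact ⟨⟨a, ha⟩⟩
  -- basic dual norm facts
  have hle : ∀ x (ξ : EuclideanSpace ℝ (Fin N)), ξ ≠ 0 → (inner ℝ x ξ : ℝ) / H ξ ≤ H₀ x := by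
    intro x ξ hξ
    rw [hdual x]
    exact le_ciSup (hbdd x) ⟨ξ, hξ⟩
  have hsup_le : ∀ (x : EuclideanSpace ℝ (Fin N)) (c : ℝ),
      (∀ ξ : EuclideanSpace ℝ (Fin N), ξ ≠ 0 → (inner ℝ x ξ : ℝ) / H ξ ≤ c) → H₀ x ≤ c := by
    intro x c h
    rw [hdual x]
    exact ciSup_le fun ξ => h ξ.1 ξ.2
  have hpos₀ : ∀ x : EuclideanSpace ℝ (Fin N), x ≠ 0 → 0 < H₀ x := by
    intro x hx
    refine lt_of_lt_of_le ?_ (hle x x hx)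
    have h1 : (0:ℝ) < (inner ℝ x x : ℝ) := by
      rw [real_inner_self_eq_norm_sq]
      exact pow_pos (norm_pos_iff.mpr hx) 2
    exact div_pos h1 (hHpos x hx)
  have hH₀0 : H₀ 0 = 0 := by
    rw [hdual 0]
    simp [ciSup_const]
  -- homogeneity of H₀
  have hhom₀ : ∀ (s : ℝ), 0 ≤ s → ∀ x, H₀ (s • x) = s * H₀ x := by
    intro s hs x
    rw [hdual (s • x), hdual x, Real.mul_iSup_of_nonneg hs]
    congr 1
    funext ξ
    rw [real_inner_smul_left, mul_div_assoc]
  -- triangle inequality and convexity of H₀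
  have hadd₀ : ∀ x y, H₀ (x + y) ≤ H₀ x + H₀ y := by
    intro x y
    refine hsup_le _ _ fun ξ hξ => ?_
    rw [inner_add_left, add_div]
    exact add_le_add (hle x ξ hξ) (hle y ξ hξ)
  have hconv₀ : ConvexOn ℝ Set.univ H₀ := by
    refine ⟨convex_univ, fun x _ y _ a b ha hb _ => ?_⟩
    calc H₀ (a • x + b • y) ≤ H₀ (a • x) + H₀ (b • y) := hadd₀ _ _
      _ = a * H₀ x + b * H₀ y := by rw [hhom₀ a ha, hhom₀ b hb]
  -- differentiability
  have hdiffH : ∀ ζ : EuclideanSpace ℝ (Fin N), ζ ≠ 0 → DifferentiableAt ℝ H ζ := by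
    intro ζ hζ
    exact (hC2.differentiableOn (by norm_num)).differentiableAt
      (isOpen_compl_singleton.mem_nhds hζ)
  have hdiffH₀ : ∀ y : EuclideanSpace ℝ (Fin N), y ≠ 0 → DifferentiableAt ℝ H₀ y := by
    intro y hy
    exact (hC2₀.differentiableOn (by norm_num)).differentiableAt
      (isOpen_compl_singleton.mem_nhds hy)
  -- Euler identities
  have heulerH : ∀ ζ : EuclideanSpace ℝ (Fin N), ζ ≠ 0 → fderiv ℝ H ζ ζ = H ζ := by
    intro ζ hζ
    exact euler_hasFDerivAt (hdiffH ζ hζ).hasFDerivAt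
      (fun s hs => by rw [hhom s ζ, abs_of_pos hs])
  have heulerH₀ : ∀ y : EuclideanSpace ℝ (Fin N), y ≠ 0 → fderiv ℝ H₀ y y = H₀ y := by
    intro y hy
    exact euler_hasFDerivAt (hdiffH₀ y hy).hasFDerivAt
      (fun s hs => hhom₀ s hs.le y)
  -- subgradient inequalities
  have hsubH : ∀ ζ : EuclideanSpace ℝ (Fin N), ζ ≠ 0 → ∀ w, fderiv ℝ H ζ w ≤ H w := by
    intro ζ hζ w
    have := subgrad_hasFDerivAt hconv (hdiffH ζ hζ).hasFDerivAt w
    rw [map_sub] at this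
    rw [heulerH ζ hζ] at this
    linarith
  have hsubH₀ : ∀ y : EuclideanSpace ℝ (Fin N), y ≠ 0 → ∀ w, fderiv ℝ H₀ y w ≤ H₀ w := by
    intro y hy w
    have := subgrad_hasFDerivAt hconv₀ (hdiffH₀ y hy).hasFDerivAt w
    rw [map_sub] at this
    rw [heulerH₀ y hy] at this
    linarith
  -- gradient / inner translations
  have hgradH₀i : ∀ y : EuclideanSpace ℝ (Fin N), y ≠ 0 → ∀ w,
      ⟪gradient H₀ y, w⟫ = fderiv ℝ H₀ y w :=
    fun y hy w => inner_gradient_eq_fderiv (hdiffH₀ y hy) w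
  have hgradHi : ∀ ζ : EuclideanSpace ℝ (Fin N), ζ ≠ 0 → ∀ w,
      ⟪gradient H ζ, w⟫ = fderiv ℝ H ζ w :=
    fun ζ hζ w => inner_gradient_eq_fderiv (hdiffH ζ hζ) w
  have hξ₀ne : ∀ y : EuclideanSpace ℝ (Fin N), y ≠ 0 → gradient H₀ y ≠ 0 := by
    intro y hy h0
    have h1 := hgradH₀i y hy y
    rw [h0, heulerH₀ y hy] at h1
    simp only [inner_zero_left] at h1
    exact absurd h1.symm (hpos₀ y hy).ne'
  -- H (∇H₀ y) = 1
  have hHunit : ∀ y : EuclideanSpace ℝ (Fin N), y ≠ 0 → H (gradient H₀ y) = 1 := by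
    intro y hy
    set ξ₀ := gradient H₀ y with hξ₀
    have hne := hξ₀ne y hy
    have hHξ₀ : 0 < H ξ₀ := hHpos ξ₀ hne
    have hy₀ : 0 < H₀ y := hpos₀ y hy
    have hinner : (inner ℝ y ξ₀ : ℝ) = H₀ y := by
      rw [real_inner_comm, hgradH₀i y hy y, heulerH₀ y hy]
    have hge : 1 ≤ H ξ₀ := by
      have h1 := hle y ξ₀ hne
      rw [hinner] at h1
      rw [div_le_iff₀ hHξ₀] at h1
      nlinarith
    have hle1 : H ξ₀ ≤ 1 := by
      set η := gradient H ξ₀ with hη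
      have hH₀η : H₀ η ≤ 1 := by
        refine hsup_le η 1 fun ξ hξ => ?_
        rw [div_le_one (hHpos ξ hξ)]
        rw [hgradHi ξ₀ hne ξ]
        exact hsubH ξ₀ hne ξ
      have h2 : H ξ₀ = (inner ℝ ξ₀ η : ℝ) := by
        rw [real_inner_comm, hgradHi ξ₀ hne ξ₀, heulerH ξ₀ hne]
      have h3 : (inner ℝ ξ₀ η : ℝ) = fderiv ℝ H₀ y η := (hgradH₀i y hy η)
      rw [h2, h3]
      exact (hsubH₀ y hy η).trans hH₀η
    linarith
  -- ∇H (∇H₀ y) = (H₀ y)⁻¹ • y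
  have hgradHξ₀ : ∀ y : EuclideanSpace ℝ (Fin N), y ≠ 0 →
      gradient H (gradient H₀ y) = (H₀ y)⁻¹ • y := by
    intro y hy
    set ξ₀ := gradient H₀ y with hξ₀
    have hne := hξ₀ne y hy
    have hy₀ : 0 < H₀ y := hpos₀ y hy
    have hinner : (inner ℝ y ξ₀ : ℝ) = H₀ y := by
      rw [real_inner_comm, hgradH₀i y hy y, heulerH₀ y hy]
    set φ : EuclideanSpace ℝ (Fin N) → ℝ := fun ξ => H₀ y * H ξ - (inner ℝ y ξ : ℝ) with hφdef
    have hφ0 : φ ξ₀ = 0 := by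
      simp only [φ]
      rw [hHunit y hy, hinner]
      ring
    have hφnn : ∀ ξ, 0 ≤ φ ξ := by
      intro ξ
      rcases eq_or_ne ξ 0 with rfl | hξ
      · simp [φ, hH0]
      · have h1 := hle y ξ hξ
        rw [div_le_iff₀ (hHpos ξ hξ)] at h1
        simp only [φ]
        linarith
    have hmin : IsLocalMin φ ξ₀ := by
      apply Filter.Eventually.of_forall
      intro ξ
      rw [hφ0]
      exact hφnn ξ
    have hφd : HasFDerivAt φ (H₀ y • fderiv ℝ H ξ₀ - innerSL ℝ y) ξ₀ := by
      exact ((hdiffH ξ₀ hne).hasFDerivAt.const_mul (H₀ y)).sub ((innerSL ℝ y).hasFDerivAt)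
    have hzero := hmin.hasFDerivAt_eq_zero hφd
    have hkey : ∀ w, H₀ y * fderiv ℝ H ξ₀ w = (inner ℝ y w : ℝ) := by
      intro w
      have := congrArg (fun L : EuclideanSpace ℝ (Fin N) →L[ℝ] ℝ => L w) hzero
      simp only [ContinuousLinearMap.sub_apply, ContinuousLinearMap.smul_apply,
        ContinuousLinearMap.zero_apply, innerSL_apply_apply, smul_eq_mul] at this
      linarith
    refine ext_inner_right ℝ fun w => ?_
    rw [hgradHi ξ₀ hne w, real_inner_smul_left]
    rw [← hkey w, ← mul_assoc, inv_mul_cancel₀ hy₀.ne', one_mul]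
  -- assembling HasGradientAt for v from a radial profile
  have hassemble : ∀ (f : ℝ → ℝ) (y : EuclideanSpace ℝ (Fin N)), y ≠ 0 → ∀ (d : ℝ),
      HasDerivAt f d (H₀ y) → (∀ z, v z = f (H₀ z)) →
      HasGradientAt v (d • gradient H₀ y) y := by
    intro f y hy d hfd hveq
    have h1 : HasFDerivAt (fun z => f (H₀ z)) (d • fderiv ℝ H₀ y) y :=
      hfd.comp_hasFDerivAt y (hdiffH₀ y hy).hasFDerivAt
    have h2 : HasFDerivAt v (d • fderiv ℝ H₀ y) y := by
      have hvf : v = fun z => f (H₀ z) := funext hveq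
      rw [hvf]; exact h1
    refine hasGradientAt_of_inner h2 fun u => ?_
    rw [real_inner_smul_left, hgradH₀i y hy u]
    simp
  obtain ⟨c₀, hgv⟩ : ∃ c₀ : ℝ, ∀ y : EuclideanSpace ℝ (Fin N), y ≠ 0 →
      HasGradientAt v ((c₀ * H₀ y ^ ((1:ℝ) - N)) • gradient H₀ y) y := by
    by_cases hN2 : N = 2
    · subst hN2
      refine ⟨(Cr - CR) / Real.log (r / R), fun y hy => ?_⟩
      have hs : 0 < H₀ y := hpos₀ y hy
      have hlog : HasDerivAt (fun u : ℝ => Real.log (u / R)) (H₀ y)⁻¹ (H₀ y) := by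
        have h1 : HasDerivAt (fun u : ℝ => Real.log u - Real.log R) (H₀ y)⁻¹ (H₀ y) :=
          (Real.hasDerivAt_log hs.ne').sub_const _
        refine h1.congr_of_eventuallyEq ?_
        filter_upwards [isOpen_Ioi.mem_nhds hs] with u hu
        rw [Real.log_div (ne_of_gt hu) hR.ne']
      have hfd := ((hlog.div_const (Real.log (r / R))).const_mul (Cr - CR)).add_const CR
      have hval : (Cr - CR) * ((H₀ y)⁻¹ / Real.log (r / R))
          = (Cr - CR) / Real.log (r / R) * H₀ y ^ ((1:ℝ) - (2:ℕ)) := by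
        have he : ((1:ℝ) - (2:ℕ)) = (-1 : ℝ) := by norm_num
        rw [he, Real.rpow_neg_one]
        ring
      have hfd' : HasDerivAt (fun u : ℝ => (Cr - CR) * (Real.log (u / R) / Real.log (r / R)) + CR)
          ((Cr - CR) / Real.log (r / R) * H₀ y ^ ((1:ℝ) - (2:ℕ))) (H₀ y) := by
        rw [← hval]; exact hfd
      exact hassemble _ y hy _ hfd' (fun z => by rw [hv z, if_pos rfl])
    · set e : ℝ := (2:ℝ) - N with he
      set den : ℝ := r ^ e - R ^ e with hden
      refine ⟨(Cr - CR) * e / den, fun y hy => ?_⟩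
      have hs : 0 < H₀ y := hpos₀ y hy
      have hpow : HasDerivAt (fun u : ℝ => u ^ e) (e * H₀ y ^ (e - 1)) (H₀ y) :=
        Real.hasDerivAt_rpow_const (Or.inl hs.ne')
      have hfd := (((hpow.sub_const (R ^ e)).div_const den).const_mul (Cr - CR)).add_const CR
      have hval : (Cr - CR) * (e * H₀ y ^ (e - 1) / den)
          = (Cr - CR) * e / den * H₀ y ^ ((1:ℝ) - N) := by
        have h1 : e - 1 = (1:ℝ) - N := by rw [he]; ring
        rw [h1]; ring
      have hfd' : HasDerivAt
          (fun u : ℝ => (Cr - CR) * ((u ^ e - R ^ e) / den) + CR)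
          ((Cr - CR) * e / den * H₀ y ^ ((1:ℝ) - N)) (H₀ y) := by
        rw [← hval]; exact hfd
      exact hassemble _ y hy _ hfd' (fun z => by rw [hv z, if_neg hN2])
  -- the vector field X is radial
  have hXf : ∀ y : EuclideanSpace ℝ (Fin N), y ≠ 0 →
      X y = (c₀ * H₀ y ^ (-(N:ℝ))) • y := by
    intro y hy
    have hs : 0 < H₀ y := hpos₀ y hy
    set t := c₀ * H₀ y ^ ((1:ℝ) - N) with ht
    have hgvy : gradient v y = t • gradient H₀ y := (hgv y hy).gradient
    have hformula : c₀ * H₀ y ^ (-(N:ℝ)) = t * (H₀ y)⁻¹ := by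
      rw [ht, mul_assoc]
      congr 1
      rw [← Real.rpow_neg_one (H₀ y), ← Real.rpow_add hs]
      congr 1
      ring
    rcases eq_or_ne t 0 with ht0 | ht0
    · have hc0 : c₀ * H₀ y ^ (-(N:ℝ)) = 0 := by rw [hformula, ht0, zero_mul]
      rw [hX y, hgvy, ht0, zero_smul, hH0, zero_smul, hc0, zero_smul]
    · rw [hX y, hgvy]
      set ξ₀ := gradient H₀ y with hξ₀
      have hne := hξ₀ne y hy
      have htξ : t • ξ₀ ≠ 0 := smul_ne_zero ht0 hne
      have hHt : H (t • ξ₀) = |t| := by rw [hhom, hHunit y hy, mul_one]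
      have hgt : gradient H (t • ξ₀) = (|t| / t) • gradient H ξ₀ := by
        have hid : HasFDerivAt (fun ξ : EuclideanSpace ℝ (Fin N) => t • ξ)
            (t • ContinuousLinearMap.id ℝ (EuclideanSpace ℝ (Fin N))) ξ₀ :=
          (hasFDerivAt_id ξ₀).const_smul t
        have h1 : HasFDerivAt (fun ξ : EuclideanSpace ℝ (Fin N) => H (t • ξ))
            (t • fderiv ℝ H (t • ξ₀)) ξ₀ := by
          have hcomp := (hdiffH _ htξ).hasFDerivAt.comp ξ₀ hid
          have heq : fderiv ℝ H (t • ξ₀) ∘L (t • ContinuousLinearMap.id ℝ (EuclideanSpace ℝ (Fin N)))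
              = t • fderiv ℝ H (t • ξ₀) := by
            ext w
            simp
          rw [heq] at hcomp
          exact hcomp
        have h2 : HasFDerivAt (fun ξ : EuclideanSpace ℝ (Fin N) => |t| * H ξ)
            (|t| • fderiv ℝ H ξ₀) ξ₀ := (hdiffH _ hne).hasFDerivAt.const_mul |t|
        have h12 : (fun ξ : EuclideanSpace ℝ (Fin N) => H (t • ξ))
            = fun ξ => |t| * H ξ := funext fun ξ => hhom t ξ
        rw [h12] at h1
        have huniq := h1.unique h2
        refine ext_inner_right ℝ fun w => ?_
        rw [hgradHi _ htξ w, real_inner_smul_left, hgradHi _ hne w]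
        have happ := congrArg (fun L : EuclideanSpace ℝ (Fin N) →L[ℝ] ℝ => L w) huniq
        simp only [ContinuousLinearMap.smul_apply, smul_eq_mul] at happ
        field_simp
        linarith
      rw [hHt, hgt, hgradHξ₀ y hy, smul_smul, smul_smul]
      congr 1
      rw [hformula]
      have habs : |t| * |t| = t * t := abs_mul_abs_self t
      field_simp
      exact sq_abs t
  refine ⟨?_, ?_, ?_⟩
  · -- divergence is zero in the annulus
    intro x hxr hxR
    have hx0 : x ≠ 0 := by
      intro h
      rw [h, hH₀0] at hxr
      linarith
    have hs : 0 < H₀ x := hpos₀ x hx0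
    have hFeq : X =ᶠ[𝓝 x] fun y => (c₀ * H₀ y ^ (-(N:ℝ))) • y := by
      filter_upwards [isOpen_compl_singleton.mem_nhds hx0] with y hy
      exact hXf y hy
    set L := fderiv ℝ H₀ x with hL
    set g : ℝ := c₀ * H₀ x ^ (-(N:ℝ)) with hg
    set G : ℝ := c₀ * (-(N:ℝ) * H₀ x ^ (-(N:ℝ) - 1)) with hG
    have hgd : HasFDerivAt (fun y : EuclideanSpace ℝ (Fin N) => c₀ * H₀ y ^ (-(N:ℝ)))
        (G • L) x := by
      have hp : HasDerivAt (fun u : ℝ => u ^ (-(N:ℝ))) (-(N:ℝ) * H₀ x ^ (-(N:ℝ) - 1)) (H₀ x) :=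
        Real.hasDerivAt_rpow_const (Or.inl hs.ne')
      have h1 := (hp.comp_hasFDerivAt x (hdiffH₀ x hx0).hasFDerivAt).const_mul c₀
      have h2 : (G • L : EuclideanSpace ℝ (Fin N) →L[ℝ] ℝ)
          = c₀ • ((-(N:ℝ) * H₀ x ^ (-(N:ℝ) - 1)) • fderiv ℝ H₀ x) := by
        rw [smul_smul, hG, hL]
      rw [h2]
      exact h1
    have hF : HasFDerivAt (fun y : EuclideanSpace ℝ (Fin N) => (c₀ * H₀ y ^ (-(N:ℝ))) • y)
        (g • ContinuousLinearMap.id ℝ (EuclideanSpace ℝ (Fin N))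
          + (G • L).smulRight x) x := hgd.smul (hasFDerivAt_id x)
    have hXd : fderiv ℝ X x
        = g • ContinuousLinearMap.id ℝ (EuclideanSpace ℝ (Fin N)) + (G • L).smulRight x := by
      rw [hFeq.fderiv_eq]
      exact hF.fderiv
    rw [hXd]
    have hterm : ∀ i : Fin N,
        (inner ℝ ((g • ContinuousLinearMap.id ℝ (EuclideanSpace ℝ (Fin N))
            + (G • L).smulRight x) (EuclideanSpace.single i 1))
          (EuclideanSpace.single i 1) : ℝ)
        = g + G * L (EuclideanSpace.single i 1) * x i := by
      intro i
      simp only [ContinuousLinearMap.add_apply, ContinuousLinearMap.smul_apply,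
        ContinuousLinearMap.id_apply, ContinuousLinearMap.smulRight_apply, smul_eq_mul]
      rw [inner_add_left, real_inner_smul_left, real_inner_smul_left]
      have h1 : (inner ℝ (EuclideanSpace.single i (1:ℝ)) (EuclideanSpace.single i (1:ℝ)) : ℝ) = 1 := by
        rw [EuclideanSpace.inner_single_left]
        simp [EuclideanSpace.single_apply]
      have h2 : (inner ℝ x (EuclideanSpace.single i (1:ℝ)) : ℝ) = x i := by
        rw [real_inner_comm, EuclideanSpace.inner_single_left]
        simp
      rw [h1, h2]
      ring
    rw [Finset.sum_congr rfl fun i _ => hterm i]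
    rw [Finset.sum_add_distrib]
    have hsum1 : ∑ _i : Fin N, g = N * g := by
      rw [Finset.sum_const, Finset.card_univ, Fintype.card_fin, nsmul_eq_mul]
    have hx_sum : ∑ i : Fin N, x i • EuclideanSpace.single i (1:ℝ) = x := by
      ext j
      simp [EuclideanSpace.single_apply, Pi.single_apply]
    have hsum2 : ∑ i : Fin N, G * L (EuclideanSpace.single i 1) * x i = G * H₀ x := by
      have h3 : L x = H₀ x := heulerH₀ x hx0
      calc ∑ i : Fin N, G * L (EuclideanSpace.single i 1) * x i
          = G * ∑ i : Fin N, x i * L (EuclideanSpace.single i 1) := by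
            rw [Finset.mul_sum]
            exact Finset.sum_congr rfl fun i _ => by ring
        _ = G * L x := by
            congr 1
            conv_rhs => rw [← hx_sum]
            rw [map_sum]
            refine Finset.sum_congr rfl fun i _ => ?_
            rw [map_smul, smul_eq_mul]
        _ = G * H₀ x := by rw [h3]
    rw [hsum1, hsum2]
    have hpow1 : H₀ x ^ (-(N:ℝ) - 1) * H₀ x = H₀ x ^ (-(N:ℝ)) := by
      rw [← Real.rpow_add_one hs.ne' (-(N:ℝ) - 1)]
      congr 1
      ring
    have hGH : G * H₀ x = -(N:ℝ) * g := by
      rw [hG, hg]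
      calc c₀ * (-(N:ℝ) * H₀ x ^ (-(N:ℝ) - 1)) * H₀ x
          = -(N:ℝ) * (c₀ * (H₀ x ^ (-(N:ℝ) - 1) * H₀ x)) := by ring
        _ = -(N:ℝ) * (c₀ * H₀ x ^ (-(N:ℝ))) := by rw [hpow1]
    rw [hGH]
    ring
  · -- inner boundary
    intro x hx
    rw [hv x]
    split_ifs with h
    · have hlogne : Real.log (r / R) ≠ 0 :=
        ne_of_lt (Real.log_neg (div_pos hr hR) ((div_lt_one hR).mpr hrR))
      rw [hx, div_self hlogne]
      ring
    · have h3 : 3 ≤ N := by omega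
      have hneg : (2:ℝ) - N < 0 := by
        have : (3:ℝ) ≤ N := by exact_mod_cast h3
        linarith
      have hdenne : r ^ ((2:ℝ) - N) - R ^ ((2:ℝ) - N) ≠ 0 :=
        sub_ne_zero.mpr (ne_of_gt (Real.rpow_lt_rpow_of_neg hr hrR hneg))
      rw [hx, div_self hdenne]
      ring
  · -- outer boundary
    intro x hx
    rw [hv x]
    split_ifs with h
    · rw [hx, div_self hR.ne', Real.log_one, zero_div, mul_zero, zero_add]
    · rw [hx, sub_self, zero_div, mul_zero, zero_add]
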